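/- For every square-integrable f : [0,T] → ℝ that is not almost everywhere equal to zero, γ ∫₀ᵀ f(t) ∫₀ᵗ f(s) e^{−ρ(t−s)} ds dt + η ∫₀ᵀ f(t)² dt > 0. Consequently, for any fixed admissible perturbation direction v with v' not almost everywhere zero, the map ε ↦ I(X + εv) is strictly convex. -/

import Mathlib

open MeasureTheory Set

lemma tri_fubini (a b : ℝ) (hab : a ≤ b) (φ ψ : ℝ → ℝ)
    (hφ : IntegrableOn φ (Ioc a b)) (hψ : IntegrableOn ψ (Ioc a b)) :
    ∫ t in a..b, ψ t * ∫ r in a..t, φ r = ∫ r in a..b, φ r * ∫ t in r..b, ψ t := by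
  set μ := volume.restrict (Ioc a b) with hμ
  set S : Set (ℝ × ℝ) := {q : ℝ × ℝ | q.1 ≤ q.2} with hS
  have hSm : MeasurableSet S := measurableSet_le measurable_fst measurable_snd
  set F : ℝ × ℝ → ℝ := S.indicator (fun q => φ q.1 * ψ q.2) with hF
  have hFint : Integrable F (μ.prod μ) := (hφ.mul_prod hψ).indicator hSm
  have swap : ∫ r, ∫ t, F (r, t) ∂μ ∂μ = ∫ t, ∫ r, F (r, t) ∂μ ∂μ :=
    integral_integral_swap (f := fun r t => F (r, t)) hFint
  have hL : ∫ t in a..b, ψ t * ∫ r in a..t, φ r = ∫ t, ∫ r, F (r, t) ∂μ ∂μ := by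
    rw [intervalIntegral.integral_of_le hab]
    refine setIntegral_congr_fun measurableSet_Ioc (fun t ht => ?_)
    have h1 : ∀ r, F (r, t) = (Iic t).indicator φ r * ψ t := by
      intro r
      simp only [hF, hS, Set.indicator_apply, Set.mem_setOf_eq, Set.mem_Iic]
      split <;> simp
    calc ψ t * ∫ r in a..t, φ r = (∫ r, (Iic t).indicator φ r ∂μ) * ψ t := by
          rw [mul_comm]
          congr 1
          rw [hμ, integral_indicator measurableSet_Iic, Measure.restrict_restrict measurableSet_Iic,
            show Iic t ∩ Ioc a b = Ioc a t from by
              ext x; simp only [mem_inter_iff, mem_Iic, mem_Ioc]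
              exact ⟨fun h => ⟨h.2.1, h.1⟩, fun h => ⟨h.2, h.1, h.2.trans ht.2⟩⟩,
            intervalIntegral.integral_of_le ht.1.le]
      _ = ∫ r, F (r, t) ∂μ := by
          rw [← integral_mul_const]
          exact integral_congr_ae (Filter.Eventually.of_forall (fun r => (h1 r).symm))
  have hR : ∫ r in a..b, φ r * ∫ t in r..b, ψ t = ∫ r, ∫ t, F (r, t) ∂μ ∂μ := by
    rw [intervalIntegral.integral_of_le hab]
    refine setIntegral_congr_fun measurableSet_Ioc (fun r hr => ?_)
    have h1 : ∀ t, F (r, t) = (Ici r).indicator ψ t * φ r := by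
      intro t
      simp only [hF, hS, Set.indicator_apply, Set.mem_setOf_eq, Set.mem_Ici]
      split <;> simp [mul_comm]
    calc φ r * ∫ t in r..b, ψ t = (∫ t, (Ici r).indicator ψ t ∂μ) * φ r := by
          rw [mul_comm]
          congr 1
          rw [hμ, integral_indicator measurableSet_Ici, Measure.restrict_restrict measurableSet_Ici,
            show Ici r ∩ Ioc a b = Icc r b from by
              ext x; simp only [mem_inter_iff, mem_Ici, mem_Ioc, mem_Icc]
              exact ⟨fun h => ⟨h.1, h.2.2⟩, fun h => ⟨h.1, hr.1.trans_le h.1, h.2⟩⟩,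
            integral_Icc_eq_integral_Ioc, intervalIntegral.integral_of_le hr.2]
      _ = ∫ t, F (r, t) ∂μ := by
          rw [← integral_mul_const]
          exact integral_congr_ae (Filter.Eventually.of_forall (fun t => (h1 t).symm))
  rw [hL, hR, swap]

-- integrability of h * primitive-type continuous function
lemma intOn_mul_cont {h g : ℝ → ℝ} {a b : ℝ} (hh : IntegrableOn h (Ioc a b))
    (hg : ContinuousOn g (Icc a b)) : IntegrableOn (fun t => h t * g t) (Ioc a b) :=
  hh.mul_continuousOn_of_subset hg measurableSet_Ioc isCompact_Icc Ioc_subset_Icc_self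

lemma contOn_primitive {h : ℝ → ℝ} {a b : ℝ} (hab : a ≤ b) (hh : IntegrableOn h (Ioc a b)) :
    ContinuousOn (fun t => ∫ s in a..t, h s) (Icc a b) := by
  have := intervalIntegral.continuousOn_primitive (f := h) (a := a) (b := b) (μ := volume)
    (by rwa [integrableOn_Icc_iff_integrableOn_Ioc])
  refine ContinuousOn.congr this (fun t ht => ?_)
  rw [intervalIntegral.integral_of_le ht.1]

lemma half_sq (a b : ℝ) (hab : a ≤ b) (h : ℝ → ℝ) (hh : IntegrableOn h (Ioc a b)) :
    ∫ t in a..b, h t * ∫ s in a..t, h s = (∫ s in a..b, h s) ^ 2 / 2 := by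
  have key := tri_fubini a b hab h h hh hh
  have hhi : IntervalIntegrable h volume a b := by
    rw [intervalIntegrable_iff_integrableOn_Ioc_of_le hab]; exact hh
  have hC : ∀ r ∈ Ioc a b, ∫ t in r..b, h t = (∫ s in a..b, h s) - ∫ s in a..r, h s := by
    intro r hr
    rw [eq_sub_iff_add_eq, add_comm,
      intervalIntegral.integral_add_adjacent_intervals
        (hhi.mono_set (by rw [uIcc_of_le hr.1.le, uIcc_of_le hab]; exact Icc_subset_Icc le_rfl hr.2))
        (hhi.mono_set (by rw [uIcc_of_le hr.2, uIcc_of_le hab]; exact Icc_subset_Icc hr.1.le le_rfl))]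
  have hGc : ContinuousOn (fun t => ∫ s in a..t, h s) (Icc a b) := contOn_primitive hab hh
  have hint1 : IntegrableOn (fun t => h t * ∫ s in a..t, h s) (Ioc a b) := intOn_mul_cont hh hGc
  have step : ∫ r in a..b, h r * ∫ t in r..b, h t
      = (∫ s in a..b, h s) ^ 2 - ∫ t in a..b, h t * ∫ s in a..t, h s := by
    rw [intervalIntegral.integral_of_le hab, intervalIntegral.integral_of_le hab,
      intervalIntegral.integral_of_le hab]
    rw [setIntegral_congr_fun measurableSet_Ioc
      (fun r hr => by rw [hC r hr] : ∀ r ∈ Ioc a b,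
        h r * ∫ t in r..b, h t = h r * ((∫ s in a..b, h s) - ∫ s in a..r, h s))]
    simp_rw [mul_sub]
    rw [integral_sub (hh.mul_const _) hint1, integral_mul_const, sq,
      intervalIntegral.integral_of_le hab]
  linarith [key.trans step]

lemma seg (a r b : ℝ) (har : a ≤ r) (hrb : r ≤ b) (h : ℝ → ℝ)
    (hh : IntegrableOn h (Ioc a b)) :
    ∫ t in r..b, h t * ∫ s in a..t, h s
      = ((∫ s in a..b, h s) ^ 2 - (∫ s in a..r, h s) ^ 2) / 2 := by
  have hab : a ≤ b := har.trans hrb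
  have hsub : Ioc r b ⊆ Ioc a b := Ioc_subset_Ioc har le_rfl
  have hh' : IntegrableOn h (Ioc r b) := hh.mono_set hsub
  have hi1 : IntervalIntegrable h volume a r := by
    rw [intervalIntegrable_iff_integrableOn_Ioc_of_le har]
    exact hh.mono_set (Ioc_subset_Ioc le_rfl hrb)
  have hi2 : ∀ t, r ≤ t → t ≤ b → IntervalIntegrable h volume r t := by
    intro t h1 h2
    rw [intervalIntegrable_iff_integrableOn_Ioc_of_le h1]
    exact hh.mono_set (Ioc_subset_Ioc har h2)
  have hi3 : IntervalIntegrable h volume a b := by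
    rw [intervalIntegrable_iff_integrableOn_Ioc_of_le hab]; exact hh
  have hrbint : ∫ t in r..b, h t = (∫ s in a..b, h s) - ∫ s in a..r, h s :=
    (intervalIntegral.integral_interval_sub_left hi3 hi1).symm
  have step : ∫ t in r..b, h t * ∫ s in a..t, h s
      = ∫ t in r..b, (h t * (∫ s in a..r, h s) + h t * ∫ s in r..t, h s) := by
    rw [intervalIntegral.integral_of_le hrb, intervalIntegral.integral_of_le hrb]
    refine setIntegral_congr_fun measurableSet_Ioc (fun t ht => ?_)
    rw [← intervalIntegral.integral_add_adjacent_intervals hi1 (hi2 t ht.1.le ht.2), mul_add]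
  rw [step, intervalIntegral.integral_add
      (by rw [intervalIntegrable_iff_integrableOn_Ioc_of_le hrb]; exact hh'.mul_const _)
      (by rw [intervalIntegrable_iff_integrableOn_Ioc_of_le hrb]
          exact intOn_mul_cont hh' (contOn_primitive hrb hh')),
    intervalIntegral.integral_mul_const, half_sq r b hrb h hh', hrbint]
  ring

lemma quad_nonneg (T ρ : ℝ) (hT : 0 ≤ T) (hρ : 0 < ρ) (f : ℝ → ℝ)
    (hf : IntegrableOn f (Ioc 0 T)) :
    0 ≤ ∫ t in (0:ℝ)..T, f t * ∫ s in (0:ℝ)..t, f s * Real.exp (-ρ * (t - s)) := by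
  have hexp : Continuous fun s : ℝ => Real.exp (ρ * s) :=
    Real.continuous_exp.comp (continuous_const.mul continuous_id)
  set h : ℝ → ℝ := fun s => f s * Real.exp (ρ * s) with hh_def
  have hh : IntegrableOn h (Ioc 0 T) := intOn_mul_cont hf hexp.continuousOn
  set G : ℝ → ℝ := fun t => ∫ s in (0:ℝ)..t, h s with hG_def
  have hGc : ContinuousOn G (Icc 0 T) := contOn_primitive hT hh
  set W : ℝ → ℝ := fun r => Real.exp (-(2*ρ)*r) with hW_def
  have hWc : Continuous W := Real.continuous_exp.comp (continuous_const.mul continuous_id)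
  have hWint : IntegrableOn W (Ioc 0 T) := hWc.integrableOn_Ioc
  have hk : IntegrableOn (fun t => h t * G t) (Ioc 0 T) := intOn_mul_cont hh hGc
  have h2ρ : (2*ρ) ≠ 0 := by positivity
  have expint : ∀ t : ℝ, ∫ r in (0:ℝ)..t, W r = (1 - Real.exp (-(2*ρ)*t))/(2*ρ) := by
    intro t
    have hderiv : ∀ r ∈ uIcc (0:ℝ) t,
        HasDerivAt (fun x => -(1/(2*ρ)) * Real.exp (-(2*ρ)*x)) (W r) r := by
      intro r _
      have h1 : HasDerivAt (fun x : ℝ => -(2*ρ)*x) (-(2*ρ)) r := by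
        simpa using (hasDerivAt_id r).const_mul (-(2*ρ))
      have h2 := (h1.exp).const_mul (-(1/(2*ρ)))
      refine h2.congr_deriv ?_
      rw [hW_def]
      field_simp
    rw [intervalIntegral.integral_eq_sub_of_hasDerivAt hderiv (hWc.intervalIntegrable _ _)]
    rw [show -(2*ρ)*(0:ℝ) = 0 by ring, Real.exp_zero]
    field_simp
    ring
  have e1 : ∫ t in (0:ℝ)..T, f t * ∫ s in (0:ℝ)..t, f s * Real.exp (-ρ * (t - s))
      = ∫ t in (0:ℝ)..T, W t * (h t * G t) := by
    refine intervalIntegral.integral_congr (fun t _ => ?_)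
    have i1 : (∫ s in (0:ℝ)..t, f s * Real.exp (-ρ * (t - s)))
        = Real.exp (-ρ*t) * G t := by
      simp only [hG_def]
      rw [← intervalIntegral.integral_const_mul]
      refine intervalIntegral.integral_congr (fun s _ => ?_)
      simp only [hh_def]
      rw [show -ρ * (t - s) = ρ * s + -ρ*t by ring, Real.exp_add]
      ring
    have h3 : Real.exp (-ρ*t) = W t * Real.exp (ρ*t) := by
      rw [hW_def, ← Real.exp_add]; congr 1; ring
    rw [i1, h3]
    simp only [hh_def]
    ring
  set E := Real.exp (-(2*ρ)*T) with hE_def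
  set J := ∫ r in (0:ℝ)..T, W r * (G r)^2 with hJ_def
  have e3 : ∫ t in (0:ℝ)..T, W t * (h t * G t)
      = ∫ t in (0:ℝ)..T, (h t * G t
          - (2*ρ) * ((∫ r in (0:ℝ)..t, W r) * (h t * G t))) := by
    refine intervalIntegral.integral_congr (fun t _ => ?_)
    rw [expint t, show Real.exp (-(2*ρ)*t) = W t from rfl]
    field_simp
    ring
  have hcont_c : Continuous fun t : ℝ => (1 - Real.exp (-(2*ρ)*t))/(2*ρ) :=
    (continuous_const.sub (Real.continuous_exp.comp (continuous_const.mul continuous_id))).div_const _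
  have hck : IntegrableOn (fun t => (∫ r in (0:ℝ)..t, W r) * (h t * G t)) (Ioc 0 T) := by
    have h0 : IntegrableOn (fun t => (h t * G t) * ((1 - Real.exp (-(2*ρ)*t))/(2*ρ)))
        (Ioc 0 T) := intOn_mul_cont hk hcont_c.continuousOn
    refine (integrable_congr ?_).mp h0
    refine Filter.Eventually.of_forall (fun t => ?_)
    show h t * G t * ((1 - Real.exp (-(2*ρ)*t))/(2*ρ)) = (∫ r in (0:ℝ)..t, W r) * (h t * G t)
    rw [expint t]; ring
  have i_k : IntervalIntegrable (fun t => h t * G t) volume 0 T := by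
    rw [intervalIntegrable_iff_integrableOn_Ioc_of_le hT]; exact hk
  have i_ck : IntervalIntegrable (fun t => (∫ r in (0:ℝ)..t, W r) * (h t * G t)) volume 0 T := by
    rw [intervalIntegrable_iff_integrableOn_Ioc_of_le hT]; exact hck
  have hk_eq : ∫ t in (0:ℝ)..T, h t * G t = (G T)^2/2 := by
    simp only [hG_def]
    exact half_sq 0 T hT h hh
  have hterm2 : ∫ t in (0:ℝ)..T, (∫ r in (0:ℝ)..t, W r) * (h t * G t)
      = ∫ r in (0:ℝ)..T, W r * (((G T)^2 - (G r)^2)/2) := by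
    calc ∫ t in (0:ℝ)..T, (∫ r in (0:ℝ)..t, W r) * (h t * G t)
        = ∫ t in (0:ℝ)..T, (h t * G t) * ∫ r in (0:ℝ)..t, W r :=
          intervalIntegral.integral_congr (fun t _ => mul_comm _ _)
      _ = ∫ r in (0:ℝ)..T, W r * ∫ t in r..T, (h t * G t) :=
          tri_fubini 0 T hT W (fun t => h t * G t) hWint hk
      _ = ∫ r in (0:ℝ)..T, W r * (((G T)^2 - (G r)^2)/2) := by
          rw [intervalIntegral.integral_of_le hT, intervalIntegral.integral_of_le hT]
          refine setIntegral_congr_fun measurableSet_Ioc (fun r hr => ?_)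
          congr 1
          simp only [hG_def]
          exact seg 0 r T hr.1.le hr.2 h hh
  have hWG2 : IntegrableOn (fun r => W r * (G r)^2) (Ioc 0 T) :=
    ((hWc.continuousOn.mul (hGc.pow 2)).integrableOn_Icc).mono_set Ioc_subset_Icc_self
  have i_WG2 : IntervalIntegrable (fun r => W r * (G r)^2) volume 0 T := by
    rw [intervalIntegrable_iff_integrableOn_Ioc_of_le hT]; exact hWG2
  have hterm2b : ∫ r in (0:ℝ)..T, W r * (((G T)^2 - (G r)^2)/2)
      = ((G T)^2/2) * ((1 - E)/(2*ρ)) - (1/2) * J := by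
    rw [intervalIntegral.integral_congr
      (fun r _ => by ring :
        EqOn (fun r => W r * (((G T)^2 - (G r)^2)/2))
          (fun r => ((G T)^2/2) * W r - (1/2) * (W r * (G r)^2)) (uIcc 0 T))]
    rw [intervalIntegral.integral_sub ((hWc.intervalIntegrable 0 T).const_mul _)
      (i_WG2.const_mul _), intervalIntegral.integral_const_mul,
      intervalIntegral.integral_const_mul, expint T, hJ_def, hE_def]
  have hJ0 : 0 ≤ J := by
    rw [hJ_def]
    exact intervalIntegral.integral_nonneg hT
      (fun r _ => mul_nonneg (Real.exp_pos _).le (sq_nonneg _))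
  have hE0 : 0 < E := Real.exp_pos _
  rw [e1, e3, intervalIntegral.integral_sub i_k (i_ck.const_mul _),
    intervalIntegral.integral_const_mul, hk_eq, hterm2, hterm2b]
  have harith : (2*ρ) * (((G T)^2/2) * ((1 - E)/(2*ρ)) - (1/2) * J)
      = (G T)^2/2 * (1-E) - ρ * J := by
    field_simp
  rw [harith]
  nlinarith [mul_nonneg hE0.le (sq_nonneg (G T)), mul_nonneg hρ.le hJ0]

lemma expand (T η γ ρ : ℝ) (hT : 0 < T) (x v : ℝ → ℝ)
    (hx : IntegrableOn x (Icc 0 T)) (hv : IntegrableOn v (Icc 0 T))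
    (hxv : IntegrableOn (fun t => x t * v t) (Icc 0 T))
    (hx2 : IntegrableOn (fun t => x t ^ 2) (Icc 0 T))
    (hv2 : IntegrableOn (fun t => v t ^ 2) (Icc 0 T)) (ε : ℝ) :
    ∫ t in (0:ℝ)..T, (γ * (x t + ε * v t) *
        (∫ s in (0:ℝ)..t, (x s + ε * v s) * Real.exp (-ρ * (t - s)))
      + η * (x t + ε * v t) ^ 2)
    = (γ * (∫ t in (0:ℝ)..T, v t * ∫ s in (0:ℝ)..t, v s * Real.exp (-ρ * (t - s)))
        + η * ∫ t in (0:ℝ)..T, (v t) ^ 2) * ε ^ 2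
      + (γ * (∫ t in (0:ℝ)..T, (x t * (∫ s in (0:ℝ)..t, v s * Real.exp (-ρ * (t - s)))
            + v t * ∫ s in (0:ℝ)..t, x s * Real.exp (-ρ * (t - s))))
          + η * (2 * ∫ t in (0:ℝ)..T, x t * v t)) * ε
      + (γ * (∫ t in (0:ℝ)..T, x t * ∫ s in (0:ℝ)..t, x s * Real.exp (-ρ * (t - s)))
          + η * ∫ t in (0:ℝ)..T, (x t) ^ 2) := by
  have hxI : IntegrableOn x (Ioc 0 T) := hx.mono_set Ioc_subset_Icc_self
  have hvI : IntegrableOn v (Ioc 0 T) := hv.mono_set Ioc_subset_Icc_self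
  set K : (ℝ → ℝ) → ℝ → ℝ := fun w t => ∫ s in (0:ℝ)..t, w s * Real.exp (-ρ * (t - s))
    with hK_def
  have hexpρ : Continuous fun s : ℝ => Real.exp (ρ * s) :=
    Real.continuous_exp.comp (continuous_const.mul continuous_id)
  have Kcont : ∀ w : ℝ → ℝ, IntegrableOn w (Ioc 0 T) → ContinuousOn (K w) (Icc 0 T) := by
    intro w hw
    have he : ∀ t, K w t = Real.exp (-ρ * t) * ∫ s in (0:ℝ)..t, w s * Real.exp (ρ * s) := by
      intro t
      show (∫ s in (0:ℝ)..t, w s * Real.exp (-ρ * (t - s))) = _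
      rw [← intervalIntegral.integral_const_mul]
      refine intervalIntegral.integral_congr (fun s _ => ?_)
      rw [show -ρ * (t - s) = ρ * s + -ρ * t by ring, Real.exp_add]; ring
    refine ContinuousOn.congr ?_ (fun t _ => he t)
    exact ((Real.continuous_exp.comp (continuous_const.mul continuous_id)).continuousOn.mul
      (contOn_primitive hT.le (intOn_mul_cont hw hexpρ.continuousOn)))
  have Kint : ∀ w u : ℝ → ℝ, IntegrableOn w (Ioc 0 T) → IntegrableOn u (Ioc 0 T) →
      IntegrableOn (fun t => u t * K w t) (Ioc 0 T) := fun w u hw hu =>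
    intOn_mul_cont hu (Kcont w hw)
  have hKlin : ∀ t ∈ Icc (0:ℝ) T, K (fun s => x s + ε * v s) t = K x t + ε * K v t := by
    intro t ht
    have hxi : IntervalIntegrable (fun s => x s * Real.exp (-ρ * (t - s))) volume 0 t := by
      rw [intervalIntegrable_iff_integrableOn_Ioc_of_le ht.1]
      exact intOn_mul_cont (hxI.mono_set (Ioc_subset_Ioc le_rfl ht.2))
        (Continuous.continuousOn (by fun_prop))
    have hvi : IntervalIntegrable (fun s => v s * Real.exp (-ρ * (t - s))) volume 0 t := by
      rw [intervalIntegrable_iff_integrableOn_Ioc_of_le ht.1]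
      exact intOn_mul_cont (hvI.mono_set (Ioc_subset_Ioc le_rfl ht.2))
        (Continuous.continuousOn (by fun_prop))
    show (∫ s in (0:ℝ)..t, (x s + ε * v s) * Real.exp (-ρ * (t - s))) = _
    rw [intervalIntegral.integral_congr (g := fun s => x s * Real.exp (-ρ * (t - s))
        + ε * (v s * Real.exp (-ρ * (t - s)))) (fun s _ => by ring),
      intervalIntegral.integral_add hxi (hvi.const_mul ε),
      intervalIntegral.integral_const_mul]
  -- integrability of all pieces
  have ii : ∀ g : ℝ → ℝ, IntegrableOn g (Ioc 0 T) → IntervalIntegrable g volume 0 T := by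
    intro g hg; rwa [intervalIntegrable_iff_integrableOn_Ioc_of_le hT.le]
  have ixKx : IntervalIntegrable (fun t => x t * K x t) volume 0 T := by
    apply ii; exact Kint x x hxI hxI
  have ixKv : IntervalIntegrable (fun t => x t * K v t) volume 0 T := by
    apply ii; exact Kint v x hvI hxI
  have ivKx : IntervalIntegrable (fun t => v t * K x t) volume 0 T := by
    apply ii; exact Kint x v hxI hvI
  have ivKv : IntervalIntegrable (fun t => v t * K v t) volume 0 T := by
    apply ii; exact Kint v v hvI hvI
  have ix2 : IntervalIntegrable (fun t => x t ^ 2) volume 0 T := by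
    apply ii; exact hx2.mono_set Ioc_subset_Icc_self
  have iv2 : IntervalIntegrable (fun t => v t ^ 2) volume 0 T := by
    apply ii; exact hv2.mono_set Ioc_subset_Icc_self
  have ixv : IntervalIntegrable (fun t => x t * v t) volume 0 T := by
    apply ii; exact hxv.mono_set Ioc_subset_Icc_self
  have iq0 : IntervalIntegrable (fun t => γ * (x t * K x t) + η * x t ^ 2) volume 0 T :=
    (ixKx.const_mul γ).add (ix2.const_mul η)
  have iq1 : IntervalIntegrable
      (fun t => γ * (x t * K v t + v t * K x t) + η * (2 * (x t * v t))) volume 0 T :=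
    ((ixKv.add ivKx).const_mul γ).add ((ixv.const_mul 2).const_mul η)
  have iq2 : IntervalIntegrable (fun t => γ * (v t * K v t) + η * v t ^ 2) volume 0 T :=
    (ivKv.const_mul γ).add (iv2.const_mul η)
  have main : ∫ t in (0:ℝ)..T, (γ * (x t + ε * v t) * K (fun s => x s + ε * v s) t
      + η * (x t + ε * v t) ^ 2)
      = (∫ t in (0:ℝ)..T, (γ * (x t * K x t) + η * x t ^ 2))
        + (ε * (∫ t in (0:ℝ)..T, (γ * (x t * K v t + v t * K x t) + η * (2 * (x t * v t))))
        + ε ^ 2 * ∫ t in (0:ℝ)..T, (γ * (v t * K v t) + η * v t ^ 2)) := by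
    rw [show (∫ t in (0:ℝ)..T, (γ * (x t + ε * v t) * K (fun s => x s + ε * v s) t
        + η * (x t + ε * v t) ^ 2))
        = ∫ t in (0:ℝ)..T, ((γ * (x t * K x t) + η * x t ^ 2)
          + (ε * (γ * (x t * K v t + v t * K x t) + η * (2 * (x t * v t)))
            + ε ^ 2 * (γ * (v t * K v t) + η * v t ^ 2))) from by
      rw [intervalIntegral.integral_of_le hT.le, intervalIntegral.integral_of_le hT.le]
      refine setIntegral_congr_fun measurableSet_Ioc (fun t ht => ?_)
      rw [hKlin t (Ioc_subset_Icc_self ht)]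
      ring]
    rw [intervalIntegral.integral_add iq0 ((iq1.const_mul ε).add (iq2.const_mul (ε^2))),
      intervalIntegral.integral_add (iq1.const_mul ε) (iq2.const_mul (ε^2)),
      intervalIntegral.integral_const_mul, intervalIntegral.integral_const_mul]
  have e0 : ∫ t in (0:ℝ)..T, (γ * (x t * K x t) + η * x t ^ 2)
      = γ * (∫ t in (0:ℝ)..T, x t * K x t) + η * ∫ t in (0:ℝ)..T, x t ^ 2 := by
    rw [intervalIntegral.integral_add (ixKx.const_mul γ) (ix2.const_mul η),
      intervalIntegral.integral_const_mul, intervalIntegral.integral_const_mul]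
  have e1 : ∫ t in (0:ℝ)..T, (γ * (x t * K v t + v t * K x t) + η * (2 * (x t * v t)))
      = γ * (∫ t in (0:ℝ)..T, (x t * K v t + v t * K x t))
        + η * (2 * ∫ t in (0:ℝ)..T, x t * v t) := by
    rw [intervalIntegral.integral_add ((ixKv.add ivKx).const_mul γ)
        ((ixv.const_mul 2).const_mul η),
      intervalIntegral.integral_const_mul, intervalIntegral.integral_const_mul,
      intervalIntegral.integral_const_mul]
  have e2 : ∫ t in (0:ℝ)..T, (γ * (v t * K v t) + η * v t ^ 2)
      = γ * (∫ t in (0:ℝ)..T, v t * K v t) + η * ∫ t in (0:ℝ)..T, v t ^ 2 := by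
    rw [intervalIntegral.integral_add (ivKv.const_mul γ) (iv2.const_mul η),
      intervalIntegral.integral_const_mul, intervalIntegral.integral_const_mul]
  rw [show (∫ t in (0:ℝ)..T, (γ * (x t + ε * v t) *
        (∫ s in (0:ℝ)..t, (x s + ε * v s) * Real.exp (-ρ * (t - s)))
      + η * (x t + ε * v t) ^ 2))
      = ∫ t in (0:ℝ)..T, (γ * (x t + ε * v t) * K (fun s => x s + ε * v s) t
      + η * (x t + ε * v t) ^ 2) from rfl, main, e0, e1, e2]
  ring

lemma quad_strict (Q L C : ℝ) (hQ : 0 < Q) :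
    StrictConvexOn ℝ Set.univ (fun ε : ℝ => Q * ε ^ 2 + L * ε + C) := by
  refine ⟨convex_univ, fun p _ q _ hpq a b ha hb hab => ?_⟩
  simp only [smul_eq_mul]
  have h2 : 0 < (p - q) ^ 2 :=
    lt_of_le_of_ne (sq_nonneg _) (Ne.symm (pow_ne_zero 2 (sub_ne_zero.mpr hpq)))
  have key : a * (Q * p ^ 2 + L * p + C) + b * (Q * q ^ 2 + L * q + C)
      - (Q * (a * p + b * q) ^ 2 + L * (a * p + b * q) + C)
      = (a * b) * (Q * (p - q) ^ 2) := by
    have hb' : b = 1 - a := by linarith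
    subst hb'; ring
  nlinarith [mul_pos (mul_pos ha hb) (mul_pos hQ h2), key]

/-- Strict positivity of the cost quadratic form: for every square-integrable `f` on
`[0,T]` that is not a.e. zero, `γ ∫₀ᵀ f(t) ∫₀ᵗ f(s) e^{-ρ(t-s)} ds dt + η ∫₀ᵀ f(t)² dt > 0`.
Consequently, for any perturbation direction `v` with `v'` not a.e. zero, the map
`ε ↦ I(X + εv)` is strictly convex. -/
theorem stmt_9 (T η γ ρ : ℝ) (hT : 0 < T) (hη : 0 < η) (hγ : 0 < γ) (hρ : 0 < ρ)
    (I : (ℝ → ℝ) → ℝ)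
    (hI : ∀ g : ℝ → ℝ, I g = ∫ t in (0:ℝ)..T,
      (γ * g t * (∫ s in (0:ℝ)..t, g s * Real.exp (-ρ * (t - s))) + η * (g t) ^ 2)) :
    (∀ f : ℝ → ℝ, MemLp f 2 (volume.restrict (Icc 0 T)) →
      ¬ (f =ᵐ[volume.restrict (Icc 0 T)] (fun _ => 0)) →
      0 < γ * (∫ t in (0:ℝ)..T, f t * ∫ s in (0:ℝ)..t, f s * Real.exp (-ρ * (t - s))) +
        η * ∫ t in (0:ℝ)..T, (f t) ^ 2) ∧
    (∀ X' v' : ℝ → ℝ, MemLp X' 2 (volume.restrict (Icc 0 T)) →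
      MemLp v' 2 (volume.restrict (Icc 0 T)) →
      ¬ (v' =ᵐ[volume.restrict (Icc 0 T)] (fun _ => 0)) →
      StrictConvexOn ℝ Set.univ (fun ε : ℝ => I (fun t => X' t + ε * v' t))) := by
  haveI : IsFiniteMeasure (volume.restrict (Icc (0:ℝ) T)) :=
    ⟨by rw [Measure.restrict_apply_univ]; exact measure_Icc_lt_top⟩
  have part1 : ∀ f : ℝ → ℝ, MemLp f 2 (volume.restrict (Icc 0 T)) →
      ¬ (f =ᵐ[volume.restrict (Icc 0 T)] (fun _ => 0)) →
      0 < γ * (∫ t in (0:ℝ)..T, f t * ∫ s in (0:ℝ)..t, f s * Real.exp (-ρ * (t - s))) +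
        η * ∫ t in (0:ℝ)..T, (f t) ^ 2 := by
    intro f hf hf0
    have hfi : IntegrableOn f (Icc 0 T) := hf.integrable one_le_two
    have hA := quad_nonneg T ρ hT.le hρ f (hfi.mono_set Ioc_subset_Icc_self)
    have hsq : Integrable (fun t => f t ^ 2) (volume.restrict (Icc 0 T)) := hf.integrable_sq
    have hB : 0 < ∫ t in (0:ℝ)..T, (f t) ^ 2 := by
      rw [intervalIntegral.integral_of_le hT.le, ← integral_Icc_eq_integral_Ioc]
      rcases (integral_nonneg (fun t => sq_nonneg (f t)) :
          (0:ℝ) ≤ ∫ t in Icc (0:ℝ) T, f t ^ 2).lt_or_eq with h | h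
      · exact h
      · exfalso
        apply hf0
        have h2 := (integral_eq_zero_iff_of_nonneg
          (fun t => sq_nonneg (f t)) hsq).mp h.symm
        filter_upwards [h2] with t ht
        exact (pow_eq_zero_iff two_ne_zero).mp ht
    nlinarith [mul_nonneg hγ.le hA, mul_pos hη hB]
  refine ⟨part1, ?_⟩
  intro X' v' hX hv hv0
  have hXi : IntegrableOn X' (Icc 0 T) := hX.integrable one_le_two
  have hvi : IntegrableOn v' (Icc 0 T) := hv.integrable one_le_two
  have hX2 : IntegrableOn (fun t => X' t ^ 2) (Icc 0 T) := hX.integrable_sq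
  have hv2 : IntegrableOn (fun t => v' t ^ 2) (Icc 0 T) := hv.integrable_sq
  have hXv : IntegrableOn (fun t => X' t * v' t) (Icc 0 T) := by
    have hsum : IntegrableOn (fun t => (X' t + v' t) ^ 2) (Icc 0 T) :=
      (hX.add hv).integrable_sq
    have h3 : IntegrableOn (fun t => ((X' t + v' t) ^ 2 - X' t ^ 2 - v' t ^ 2) * (1/2))
        (Icc 0 T) := ((hsum.sub hX2).sub hv2).mul_const _
    refine (integrable_congr (Filter.Eventually.of_forall (fun t => ?_))).mp h3
    ring
  have hQ : 0 < γ * (∫ t in (0:ℝ)..T, v' t * ∫ s in (0:ℝ)..t, v' s * Real.exp (-ρ * (t - s)))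
      + η * ∫ t in (0:ℝ)..T, (v' t) ^ 2 := part1 v' hv hv0
  have hfun : (fun ε : ℝ => I (fun t => X' t + ε * v' t))
      = fun ε : ℝ =>
        (γ * (∫ t in (0:ℝ)..T, v' t * ∫ s in (0:ℝ)..t, v' s * Real.exp (-ρ * (t - s)))
          + η * ∫ t in (0:ℝ)..T, (v' t) ^ 2) * ε ^ 2
        + (γ * (∫ t in (0:ℝ)..T, (X' t * (∫ s in (0:ℝ)..t, v' s * Real.exp (-ρ * (t - s)))
              + v' t * ∫ s in (0:ℝ)..t, X' s * Real.exp (-ρ * (t - s))))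
            + η * (2 * ∫ t in (0:ℝ)..T, X' t * v' t)) * ε
        + (γ * (∫ t in (0:ℝ)..T, X' t * ∫ s in (0:ℝ)..t, X' s * Real.exp (-ρ * (t - s)))
            + η * ∫ t in (0:ℝ)..T, (X' t) ^ 2) := by
    funext ε
    rw [hI]
    exact expand T η γ ρ hT X' v' hXi hvi hXv hX2 hv2 ε
  rw [hfun]
  exact quad_strict _ _ _ hQ
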